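/- (Uniqueness of the entropic primal minimizer.) Let γ₁ and γ₂ be couplings of μ and ν, absolutely continuous with respect to Lebesgue measure on E × E with densities ρ₁ and ρ₂ such that c is γᵢ-integrable and ρᵢ log ρᵢ is Lebesgue-integrable (i = 1, 2). If F_ε(γ₁) = F_ε(γ₂) and both attain the infimum of F_ε over all couplings of μ and ν that are absolutely continuous with density ρ such that c is integrable and ρ log ρ is Lebesgue-integrable, then γ₁ = γ₂. -/

import Mathlib

open MeasureTheory
open scoped ENNReal

noncomputable section

abbrev E (d : ℕ) := EuclideanSpace ℝ (Fin d)

def cost {d : ℕ} (x y : E d) : ℝ := (1 / 2) * ‖x - y‖ ^ 2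

def Dent {d : ℕ} (ε : ℝ) (μ ν : Measure (E d)) (φ ψ : E d → ℝ) : ℝ :=
  (∫ x, φ x ∂μ) + (∫ y, ψ y ∂ν) -
    ε * ∫ r : E d × E d, Real.exp ((φ r.1 + ψ r.2 - cost r.1 r.2) / ε)

def Admissible {d : ℕ} (ε : ℝ) (μ ν : Measure (E d)) (φ ψ : E d → ℝ) : Prop :=
  Measurable φ ∧ Measurable ψ ∧ Integrable φ μ ∧ Integrable ψ ν ∧
    Integrable (fun r : E d × E d => Real.exp ((φ r.1 + ψ r.2 - cost r.1 r.2) / ε)) volume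

def IsCoupling {d : ℕ} (μ ν : Measure (E d)) (γ : Measure (E d × E d)) : Prop :=
  IsProbabilityMeasure γ ∧ γ.map Prod.fst = μ ∧ γ.map Prod.snd = ν

def Fent {d : ℕ} (ε : ℝ) (γ : Measure (E d × E d)) (ρ : E d × E d → ℝ) : ℝ :=
  (∫ r : E d × E d, cost r.1 r.2 ∂γ) + ε * ∫ r : E d × E d, ρ r * Real.log (ρ r)

lemma mul_log_superadd {s t : ℝ} (hs : 0 ≤ s) (ht : 0 ≤ t) :
    s * Real.log s + t * Real.log t ≤ (s + t) * Real.log (s + t) := by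
  rcases hs.eq_or_lt with h | hs'
  · simp [← h]
  rcases ht.eq_or_lt with h | ht'
  · simp [← h]
  have h1 : s * Real.log s ≤ s * Real.log (s + t) :=
    mul_le_mul_of_nonneg_left (Real.log_le_log hs' (by linarith)) hs
  have h2 : t * Real.log t ≤ t * Real.log (s + t) :=
    mul_le_mul_of_nonneg_left (Real.log_le_log ht' (by linarith)) ht
  nlinarith [h1, h2]

lemma half_mul_log {a : ℝ} (ha : 0 ≤ a) :
    (a / 2) * Real.log (a / 2) = (a * Real.log a - a * Real.log 2) / 2 := by
  rcases ha.eq_or_lt with h | ha'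
  · simp [← h]
  rw [Real.log_div ha'.ne' two_ne_zero]; ring

lemma midpoint_mul_log_le {a b : ℝ} (ha : 0 ≤ a) (hb : 0 ≤ b) :
    ((a + b) / 2) * Real.log ((a + b) / 2)
      ≤ (a * Real.log a + b * Real.log b) / 2 := by
  have := Real.convexOn_mul_log.2 (Set.mem_Ici.2 ha) (Set.mem_Ici.2 hb)
    (by norm_num : (0:ℝ) ≤ 1/2) (by norm_num : (0:ℝ) ≤ 1/2) (by norm_num)
  simp only [smul_eq_mul] at this
  have h : (1:ℝ)/2 * a + 1/2 * b = (a + b) / 2 := by ring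
  rw [h] at this
  linarith

lemma midpoint_mul_log_lt {a b : ℝ} (ha : 0 ≤ a) (hb : 0 ≤ b) (hne : a ≠ b) :
    ((a + b) / 2) * Real.log ((a + b) / 2)
      < (a * Real.log a + b * Real.log b) / 2 := by
  have := Real.strictConvexOn_mul_log.2 (Set.mem_Ici.2 ha) (Set.mem_Ici.2 hb)
    hne (by norm_num : (0:ℝ) < 1/2) (by norm_num : (0:ℝ) < 1/2) (by norm_num)
  simp only [smul_eq_mul] at this
  have h : (1:ℝ)/2 * a + 1/2 * b = (a + b) / 2 := by ring
  rw [h] at this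
  linarith

lemma midpoint_mul_log_ge {a b : ℝ} (ha : 0 ≤ a) (hb : 0 ≤ b) :
    (a * Real.log a - a * Real.log 2) / 2 + (b * Real.log b - b * Real.log 2) / 2
      ≤ ((a + b) / 2) * Real.log ((a + b) / 2) := by
  have h := mul_log_superadd (div_nonneg ha two_pos.le) (div_nonneg hb two_pos.le)
  rw [half_mul_log ha, half_mul_log hb] at h
  have h2 : a / 2 + b / 2 = (a + b) / 2 := by ring
  rwa [h2] at h

-- Integrability of a probability density
lemma integrable_of_density {α : Type*} [MeasurableSpace α] {m : Measure α}
    {ρ : α → ℝ} (hm : Measurable ρ) (h0 : ∀ r, 0 ≤ ρ r)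
    (h1 : m.withDensity (fun r => ENNReal.ofReal (ρ r)) Set.univ = 1) :
    Integrable ρ m := by
  refine ⟨hm.aestronglyMeasurable, ?_⟩
  rw [withDensity_apply _ MeasurableSet.univ, setLIntegral_univ] at h1
  rw [hasFiniteIntegral_iff_norm]
  have : ∀ r, ENNReal.ofReal ‖ρ r‖ = ENNReal.ofReal (ρ r) := fun r => by
    rw [Real.norm_eq_abs, abs_of_nonneg (h0 r)]
  simp only [this, h1]
  exact ENNReal.one_lt_top

theorem entropic_primal_minimizer_unique {d : ℕ} (hd : 1 ≤ d) {ε : ℝ} (hε : 0 < ε)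
    (μ ν : Measure (E d)) [IsProbabilityMeasure μ] [IsProbabilityMeasure ν]
    (γ₁ γ₂ : Measure (E d × E d)) (hγ₁ : IsCoupling μ ν γ₁) (hγ₂ : IsCoupling μ ν γ₂)
    (ρ₁ ρ₂ : E d × E d → ℝ)
    (hρ₁m : Measurable ρ₁) (hρ₂m : Measurable ρ₂)
    (hρ₁0 : ∀ r, 0 ≤ ρ₁ r) (hρ₂0 : ∀ r, 0 ≤ ρ₂ r)
    (hγ₁ρ : γ₁ = volume.withDensity fun r => ENNReal.ofReal (ρ₁ r))
    (hγ₂ρ : γ₂ = volume.withDensity fun r => ENNReal.ofReal (ρ₂ r))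
    (hc₁ : Integrable (fun r : E d × E d => cost r.1 r.2) γ₁)
    (hc₂ : Integrable (fun r : E d × E d => cost r.1 r.2) γ₂)
    (he₁ : Integrable (fun r => ρ₁ r * Real.log (ρ₁ r)) volume)
    (he₂ : Integrable (fun r => ρ₂ r * Real.log (ρ₂ r)) volume)
    (heq : Fent ε γ₁ ρ₁ = Fent ε γ₂ ρ₂)
    (hmin₁ : ∀ γ : Measure (E d × E d), ∀ ρ : E d × E d → ℝ,
      IsCoupling μ ν γ → Measurable ρ → (∀ r, 0 ≤ ρ r) →
      γ = (volume.withDensity fun r => ENNReal.ofReal (ρ r)) →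
      Integrable (fun r : E d × E d => cost r.1 r.2) γ →
      Integrable (fun r => ρ r * Real.log (ρ r)) volume →
      Fent ε γ₁ ρ₁ ≤ Fent ε γ ρ)
    (hmin₂ : ∀ γ : Measure (E d × E d), ∀ ρ : E d × E d → ℝ,
      IsCoupling μ ν γ → Measurable ρ → (∀ r, 0 ≤ ρ r) →
      γ = (volume.withDensity fun r => ENNReal.ofReal (ρ r)) →
      Integrable (fun r : E d × E d => cost r.1 r.2) γ →
      Integrable (fun r => ρ r * Real.log (ρ r)) volume →
      Fent ε γ₂ ρ₂ ≤ Fent ε γ ρ) :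
    γ₁ = γ₂ := by
  classical
  obtain ⟨hp₁, hf₁, hs₁⟩ := hγ₁
  obtain ⟨hp₂, hf₂, hs₂⟩ := hγ₂
  have hint₁ : Integrable ρ₁ volume :=
    integrable_of_density hρ₁m hρ₁0 (by rw [← hγ₁ρ]; exact measure_univ)
  have hint₂ : Integrable ρ₂ volume :=
    integrable_of_density hρ₂m hρ₂0 (by rw [← hγ₂ρ]; exact measure_univ)
  set ρ : E d × E d → ℝ := fun r => (ρ₁ r + ρ₂ r) / 2 with hρdef
  have hρm : Measurable ρ := (hρ₁m.add hρ₂m).div_const 2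
  have hρ0 : ∀ r, 0 ≤ ρ r := fun r => by
    have := hρ₁0 r; have := hρ₂0 r; positivity
  set γ : Measure (E d × E d) :=
    volume.withDensity (fun r => ENNReal.ofReal (ρ r)) with hγdef
  -- decomposition of γ
  have hdens : (fun r => ENNReal.ofReal (ρ r)) =
      (((1:ℝ≥0∞)/2) • fun r => ENNReal.ofReal (ρ₁ r)) +
      (((1:ℝ≥0∞)/2) • fun r => ENNReal.ofReal (ρ₂ r)) := by
    funext r
    have h2 : ((1:ℝ≥0∞)/2) = ENNReal.ofReal (1/2) := by
      rw [ENNReal.ofReal_div_of_pos two_pos]; simp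
    have e1 : (ρ₁ r + ρ₂ r)/2 = 1/2 * ρ₁ r + 1/2 * ρ₂ r := by ring
    show ENNReal.ofReal ((ρ₁ r + ρ₂ r)/2) = _
    rw [e1, ENNReal.ofReal_add (mul_nonneg (by norm_num) (hρ₁0 r))
      (mul_nonneg (by norm_num) (hρ₂0 r)),
      ENNReal.ofReal_mul (by norm_num : (0:ℝ) ≤ 1/2),
      ENNReal.ofReal_mul (by norm_num : (0:ℝ) ≤ 1/2)]
    simp only [Pi.add_apply, Pi.smul_apply, smul_eq_mul, h2]
  have hγdecomp : γ = ((1:ℝ≥0∞)/2) • γ₁ + ((1:ℝ≥0∞)/2) • γ₂ := by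
    rw [hγdef, hdens, withDensity_add_left (hρ₁m.ennreal_ofReal.const_smul (((1:ℝ≥0∞)/2))),
      withDensity_smul _ hρ₁m.ennreal_ofReal,
      withDensity_smul _ hρ₂m.ennreal_ofReal, hγ₁ρ, hγ₂ρ]
  have hhalf_ne_top : ((1:ℝ≥0∞)/2) ≠ ⊤ :=
    (ENNReal.div_lt_top ENNReal.one_ne_top two_ne_zero).ne
  have hhalf_toReal : ((1:ℝ≥0∞)/2).toReal = (1:ℝ)/2 := by
    simp [ENNReal.toReal_div]
  -- γ is a coupling
  have hcoup : IsCoupling μ ν γ := by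
    refine ⟨⟨?_⟩, ?_, ?_⟩
    · rw [hγdecomp]
      simp only [Measure.coe_add, Pi.add_apply, Measure.smul_apply, smul_eq_mul,
        measure_univ, mul_one]
      exact ENNReal.add_halves 1
    · rw [hγdecomp, Measure.map_add _ _ measurable_fst, Measure.map_smul,
        Measure.map_smul, hf₁, hf₂, ← two_smul ℝ≥0∞, smul_smul]
      rw [show (2:ℝ≥0∞) * (1/2) = 1 by
        rw [mul_comm, ENNReal.div_mul_cancel two_ne_zero ENNReal.ofNat_ne_top], one_smul]
    · rw [hγdecomp, Measure.map_add _ _ measurable_snd, Measure.map_smul,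
        Measure.map_smul, hs₁, hs₂, ← two_smul ℝ≥0∞, smul_smul]
      rw [show (2:ℝ≥0∞) * (1/2) = 1 by
        rw [mul_comm, ENNReal.div_mul_cancel two_ne_zero ENNReal.ofNat_ne_top], one_smul]
  -- cost integrable wrt γ
  have hc₁' := hc₁.smul_measure hhalf_ne_top
  have hc₂' := hc₂.smul_measure hhalf_ne_top
  have hcostγ : Integrable (fun r : E d × E d => cost r.1 r.2) γ := by
    rw [hγdecomp]; exact hc₁'.add_measure hc₂'
  have hcostint : ∫ r : E d × E d, cost r.1 r.2 ∂γ =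
      ((∫ r : E d × E d, cost r.1 r.2 ∂γ₁) + ∫ r : E d × E d, cost r.1 r.2 ∂γ₂) / 2 := by
    rw [hγdecomp, integral_add_measure hc₁' hc₂', integral_smul_measure,
      integral_smul_measure, hhalf_toReal]
    simp only [smul_eq_mul]; ring
  -- entropy bounds
  set U : E d × E d → ℝ :=
    fun r => (ρ₁ r * Real.log (ρ₁ r) + ρ₂ r * Real.log (ρ₂ r)) / 2 with hUdef
  set L : E d × E d → ℝ := fun r =>
    (ρ₁ r * Real.log (ρ₁ r) - ρ₁ r * Real.log 2) / 2 +
    (ρ₂ r * Real.log (ρ₂ r) - ρ₂ r * Real.log 2) / 2 with hLdef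
  have hUle : ∀ r, ρ r * Real.log (ρ r) ≤ U r := fun r =>
    midpoint_mul_log_le (hρ₁0 r) (hρ₂0 r)
  have hLle : ∀ r, L r ≤ ρ r * Real.log (ρ r) := fun r =>
    midpoint_mul_log_ge (hρ₁0 r) (hρ₂0 r)
  have hUint : Integrable U volume := (he₁.add he₂).div_const 2
  have hLint : Integrable L volume :=
    ((he₁.sub (hint₁.mul_const (Real.log 2))).div_const 2).add
      ((he₂.sub (hint₂.mul_const (Real.log 2))).div_const 2)
  have hφρm : Measurable (fun r => ρ r * Real.log (ρ r)) :=
    hρm.mul (Real.measurable_log.comp hρm)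
  have hφρint : Integrable (fun r => ρ r * Real.log (ρ r)) volume := by
    refine Integrable.mono' (hLint.abs.add hUint.abs) hφρm.aestronglyMeasurable
      (Filter.Eventually.of_forall fun r => ?_)
    have h1 := hUle r
    have h2 := hLle r
    simp only [Real.norm_eq_abs, Pi.add_apply]
    rw [abs_le]
    constructor
    · have := neg_abs_le (L r); have := abs_nonneg (U r); linarith
    · have := le_abs_self (U r); have := abs_nonneg (L r); linarith
  -- apply minimality
  have hle := hmin₁ γ ρ hcoup hρm hρ0 hγdef hcostγ hφρint
  simp only [Fent] at hle heq
  rw [hcostint] at hle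
  set C₁ := ∫ r : E d × E d, cost r.1 r.2 ∂γ₁
  set C₂ := ∫ r : E d × E d, cost r.1 r.2 ∂γ₂
  set I₁ := ∫ r : E d × E d, ρ₁ r * Real.log (ρ₁ r)
  set I₂ := ∫ r : E d × E d, ρ₂ r * Real.log (ρ₂ r)
  set Iρ := ∫ r : E d × E d, ρ r * Real.log (ρ r)
  have hkey : (I₁ + I₂) / 2 ≤ Iρ := by
    have h1 : ε * ((I₁ + I₂) / 2) ≤ ε * Iρ := by nlinarith [hle, heq]
    exact le_of_mul_le_mul_left h1 hε
  have hUint' : ∫ r, U r = (I₁ + I₂) / 2 := by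
    rw [hUdef]
    rw [integral_div, integral_add he₁ he₂]
  -- the convexity gap is zero a.e.
  have hgapint : Integrable (fun r => U r - ρ r * Real.log (ρ r)) volume :=
    hUint.sub hφρint
  have hgapnn : 0 ≤ fun r => U r - ρ r * Real.log (ρ r) := fun r => by
    have := hUle r
    simp only [Pi.zero_apply]
    linarith
  have hzero : ∫ r, (U r - ρ r * Real.log (ρ r)) = 0 := by
    have h1 : ∫ r, (U r - ρ r * Real.log (ρ r)) = (∫ r, U r) - Iρ :=
      integral_sub hUint hφρint
    have h2 : (0:ℝ) ≤ ∫ r, (U r - ρ r * Real.log (ρ r)) := integral_nonneg hgapnn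
    rw [h1, hUint'] at *
    linarith
  have hgap0 : (fun r => U r - ρ r * Real.log (ρ r)) =ᵐ[volume] 0 :=
    (integral_eq_zero_iff_of_nonneg hgapnn hgapint).mp hzero
  have hae : ρ₁ =ᵐ[volume] ρ₂ := by
    filter_upwards [hgap0] with r hr
    by_contra hne
    have := midpoint_mul_log_lt (hρ₁0 r) (hρ₂0 r) hne
    simp only [Pi.zero_apply] at hr
    have hUr : U r = (ρ₁ r * Real.log (ρ₁ r) + ρ₂ r * Real.log (ρ₂ r)) / 2 := rfl
    have hρr : ρ r = (ρ₁ r + ρ₂ r) / 2 := rfl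
    rw [hUr, hρr] at hr
    linarith
  rw [hγ₁ρ, hγ₂ρ]
  exact withDensity_congr_ae (hae.mono fun r hr => by simp only [hr])
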